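/- Let n ≥ 2 and let A be an n × n real symmetric matrix that is tridiagonal (A i j = 0 whenever |i − j| ≥ 2) and has all entries on the first super-diagonal nonzero (A i (i+1) ≠ 0 for all i). If A is negative semidefinite, then for any integers 0 ≤ l ≤ r ≤ n − 1 with r − l + 1 < n, the principal submatrix of A on the contiguous index block {l, l+1, …, r} is negative definite. -/

import Mathlib

open scoped Matrix

/-- If a symmetric tridiagonal matrix with nonzero super-diagonal entries (the
scalar twist condition) is negative semidefinite, then every proper principal
submatrix on a contiguous index block is negative definite. -/
theorem stmt_12 (n : ℕ) (hn : 2 ≤ n) (A : Matrix (Fin n) (Fin n) ℝ)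
    (hsymm : A.IsSymm)
    (htri : ∀ i j : Fin n, 2 ≤ ((i : ℤ) - (j : ℤ)).natAbs → A i j = 0)
    (hsup : ∀ i j : Fin n, (j : ℕ) = (i : ℕ) + 1 → A i j ≠ 0)
    (hneg : ∀ x : Fin n → ℝ, x ⬝ᵥ A.mulVec x ≤ 0)
    (l r : ℕ) (hlr : l ≤ r) (hr : r ≤ n - 1) (hsize : r - l + 1 < n) :
    ∀ y : Fin (r - l + 1) → ℝ, y ≠ 0 →
      ∑ i : Fin (r - l + 1), ∑ j : Fin (r - l + 1),
        y i * A ⟨l + (i : ℕ), by have := i.2; omega⟩ ⟨l + (j : ℕ), by have := j.2; omega⟩ * y j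
        < 0 := by
  intro y hy
  by_contra hQ
  push_neg at hQ
  have hsym' : ∀ i j : Fin n, A i j = A j i := by
    intro i j
    have := congrFun (congrFun hsymm j) i
    simpa [Matrix.transpose_apply] using this
  -- the embedded vector
  set x : Fin n → ℝ := fun k =>
    if h : l ≤ (k : ℕ) ∧ (k : ℕ) ≤ r then y ⟨(k : ℕ) - l, by omega⟩ else 0 with hxdef
  have hemb : ∀ i : Fin (r - l + 1), l + (i : ℕ) < n := fun i => by have := i.2; omega
  set emb : Fin (r - l + 1) → Fin n := fun i => ⟨l + (i : ℕ), hemb i⟩ with hembdef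
  have hembinj : Function.Injective emb := by
    intro a b hab
    have : l + (a : ℕ) = l + (b : ℕ) := congrArg Fin.val hab
    exact Fin.ext (by omega)
  have hxemb : ∀ i, x (emb i) = y i := by
    intro i
    have hi := i.2
    have h1 : l ≤ l + (i : ℕ) ∧ l + (i : ℕ) ≤ r := ⟨Nat.le_add_right _ _, by omega⟩
    simp only [hxdef, hembdef, dif_pos h1]
    congr 1
    exact Fin.ext (by simp)
  have hxout : ∀ k : Fin n, ¬(l ≤ (k : ℕ) ∧ (k : ℕ) ≤ r) → x k = 0 := by
    intro k hk; simp [hxdef, dif_neg hk]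
  -- restricting sums to the block
  have hsum_restrict : ∀ f : Fin n → ℝ, (∀ k : Fin n, ¬(l ≤ (k : ℕ) ∧ (k : ℕ) ≤ r) → f k = 0) →
      ∑ k, f k = ∑ i : Fin (r - l + 1), f (emb i) := by
    intro f hf
    rw [← Finset.sum_image (g := emb) (f := f)
      (fun a _ b _ hab => hembinj hab)]
    refine (Finset.sum_subset (Finset.subset_univ _) ?_).symm
    intro k _ hk
    refine hf k ?_
    intro hkin
    refine hk (Finset.mem_image.mpr ⟨⟨(k : ℕ) - l, by omega⟩, Finset.mem_univ _, ?_⟩)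
    exact Fin.ext (by simp [hembdef]; omega)
  -- the quadratic form equals the block sum
  have hform : x ⬝ᵥ A.mulVec x =
      ∑ i : Fin (r - l + 1), ∑ j : Fin (r - l + 1),
        y i * A (emb i) (emb j) * y j := by
    have expand : x ⬝ᵥ A.mulVec x = ∑ k, ∑ k', x k * A k k' * x k' := by
      simp [dotProduct, Matrix.mulVec, Finset.mul_sum, mul_assoc]
    rw [expand]
    rw [hsum_restrict (fun k => ∑ k', x k * A k k' * x k')
      (by intro k hk; simp [hxout k hk])]
    refine Finset.sum_congr rfl fun i _ => ?_
    rw [hsum_restrict (fun k' => x (emb i) * A (emb i) k' * x k')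
      (by intro k hk; simp [hxout k hk])]
    refine Finset.sum_congr rfl fun j _ => ?_
    rw [hxemb, hxemb]
  have hQ' : ∑ i : Fin (r - l + 1), ∑ j : Fin (r - l + 1),
      y i * A (emb i) (emb j) * y j =
      ∑ i : Fin (r - l + 1), ∑ j : Fin (r - l + 1),
        y i * A ⟨l + (i : ℕ), hemb i⟩ ⟨l + (j : ℕ), hemb j⟩ * y j := rfl
  have hzero : x ⬝ᵥ A.mulVec x = 0 :=
    le_antisymm (hneg x) (by rw [hform, hQ']; exact hQ)
  -- negative semidefiniteness: the kernel condition
  have hpsd : (-A).PosSemidef := by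
    rw [Matrix.posSemidef_iff_dotProduct_mulVec]; constructor
    · ext i j
      simp [Matrix.conjTranspose_apply, hsym' i j]
    · intro v
      have := hneg v
      simp only [Matrix.neg_mulVec, dotProduct_neg, star_trivial]
      linarith
  have hker : A.mulVec x = 0 := by
    have h0 : star x ⬝ᵥ (-A) *ᵥ x = 0 := by
      simp only [Matrix.neg_mulVec, dotProduct_neg, star_trivial]
      rw [show A *ᵥ x = A.mulVec x from rfl, hzero]; ring
    have := (hpsd.dotProduct_mulVec_zero_iff x).mp h0
    have h2 : -(A *ᵥ x) = 0 := by rwa [Matrix.neg_mulVec] at this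
    have := congrArg Neg.neg h2
    simpa using this
  have hrow : ∀ k : Fin n, ∑ k', A k k' * x k' = 0 := by
    intro k
    have := congrFun hker k
    simpa [Matrix.mulVec, dotProduct] using this
  -- zero propagation
  have hxall : ∀ k : Fin n, x k = 0 := by
    rcases lt_or_ge (r + 1) n with hcase | hcase
    · -- there is room above r: propagate downward from r
      have down : ∀ d : ℕ, ∀ k : Fin n, (k : ℕ) = r - d → l ≤ (k : ℕ) → x k = 0 := by
        intro d
        induction d using Nat.strong_induction_on with
        | _ d ih =>
          intro k hk hlk
          set ρ : Fin n := ⟨(k : ℕ) + 1, by omega⟩ with hρ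
          have hsingle : ∑ k', A ρ k' * x k' = A ρ k * x k := by
            refine Finset.sum_eq_single k ?_ (by simp)
            intro b _ hbk
            rcases le_or_gt 2 (((ρ : ℤ) - (b : ℤ)).natAbs) with h2 | h2
            · rw [htri ρ b h2]; ring
            · -- b is within distance 1 of ρ = k+1, and b ≠ k, so b > r - d
              have hbv : (b : ℕ) = (k : ℕ) + 1 ∨ (b : ℕ) = (k : ℕ) + 2 := by
                have hb1 : (b : ℕ) ≠ (k : ℕ) := fun h => hbk (Fin.ext h)
                have hρv : (ρ : ℕ) = (k : ℕ) + 1 := rfl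
                omega
              have hxb : x b = 0 := by
                rcases le_or_gt (b : ℕ) r with hbr | hbr
                · rcases lt_or_ge (b : ℕ) l with hbl | hbl
                  · exact hxout b (by omega)
                  · exact ih (r - (b : ℕ)) (by omega) b (by omega) hbl
                · exact hxout b (by omega)
              rw [hxb]; ring
          have hAne : A ρ k ≠ 0 := by
            rw [hsym' ρ k]
            exact hsup k ρ rfl
          have := hrow ρ
          rw [hsingle] at this
          exact (mul_eq_zero.mp this).resolve_left hAne
      intro k
      rcases le_or_gt l (k : ℕ) with h1 | h1
      · rcases le_or_gt (k : ℕ) r with h2 | h2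
        · exact down (r - (k : ℕ)) k (by omega) h1
        · exact hxout k (by omega)
      · exact hxout k (by omega)
    · -- r = n - 1, so l > 0: propagate upward from l
      have hl0 : 0 < l := by omega
      have up : ∀ d : ℕ, ∀ k : Fin n, (k : ℕ) = l + d → (k : ℕ) ≤ r → x k = 0 := by
        intro d
        induction d using Nat.strong_induction_on with
        | _ d ih =>
          intro k hk hkr
          set ρ : Fin n := ⟨(k : ℕ) - 1, by omega⟩ with hρ
          have hρv : (ρ : ℕ) = (k : ℕ) - 1 := rfl
          have hsingle : ∑ k', A ρ k' * x k' = A ρ k * x k := by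
            refine Finset.sum_eq_single k ?_ (by simp)
            intro b _ hbk
            rcases le_or_gt 2 (((ρ : ℤ) - (b : ℤ)).natAbs) with h2 | h2
            · rw [htri ρ b h2]; ring
            · have hb1 : (b : ℕ) ≠ (k : ℕ) := fun h => hbk (Fin.ext h)
              have hbv : (b : ℕ) + 1 = (k : ℕ) ∨ (b : ℕ) + 2 = (k : ℕ) := by omega
              have hxb : x b = 0 := by
                rcases lt_or_ge (b : ℕ) l with hbl | hbl
                · exact hxout b (by omega)
                · exact ih ((b : ℕ) - l) (by omega) b (by omega) (by omega)
              rw [hxb]; ring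
          have hAne : A ρ k ≠ 0 := by
            exact hsup ρ k (by omega)
          have := hrow ρ
          rw [hsingle] at this
          exact (mul_eq_zero.mp this).resolve_left hAne
      intro k
      rcases le_or_gt l (k : ℕ) with h1 | h1
      · rcases le_or_gt (k : ℕ) r with h2 | h2
        · exact up ((k : ℕ) - l) k (by omega) h2
        · exact hxout k (by omega)
      · exact hxout k (by omega)
  refine hy (funext fun i => ?_)
  have := hxall (emb i)
  rw [hxemb] at this
  exact this
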